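/- If there exists an α-unfair 0-1 polynomial with a factor of degree k, then for all i ≥ 1 and 0 ≤ j ≤ i-1 there exists an α-unfair 0-1 polynomial with a factor of degree i·k + j. -/
import Mathlib


open Polynomial

/-- There is an α-unfair 0-1 polynomial with a factor of degree `k`. -/
def AlphaUnfairWithFactorDeg (α : ℝ) (k : ℕ) : Prop :=
  ∃ a b : ℝ[X], a.Monic ∧ b.Monic ∧ a.coeff 0 = 1 ∧ b.coeff 0 = 1 ∧
    (∀ n, a.coeff n ∈ Set.Icc (-α) (1 + α)) ∧
    (∀ n, b.coeff n ∈ Set.Icc (-α) (1 + α)) ∧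
    (∃ n, b.coeff n ≠ 0 ∧ b.coeff n ≠ 1) ∧
    (∀ n, (a * b).coeff n = 0 ∨ (a * b).coeff n = 1) ∧
    a.natDegree = k

lemma coeff_expand_mul_key (i j : ℕ) (hj0 : 0 < j) (hji : j < i) (q : ℝ[X]) (n : ℕ) :
    ((expand ℝ i q * (X ^ j + 1)).coeff n = 0) ∨
      ∃ m, (expand ℝ i q * (X ^ j + 1)).coeff n = q.coeff m := by
  have hi : 0 < i := lt_trans hj0 hji
  have hcoeff : (expand ℝ i q * (X ^ j + 1)).coeff n =
      (if j ≤ n then (expand ℝ i q).coeff (n - j) else 0) + (expand ℝ i q).coeff n := by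
    rw [mul_add, mul_one, coeff_add, coeff_mul_X_pow']
  rw [hcoeff, coeff_expand hi, coeff_expand hi]
  by_cases hdn : i ∣ n
  · right
    refine ⟨n / i, ?_⟩
    rw [if_pos hdn]
    have h1 : (if j ≤ n then (if i ∣ n - j then q.coeff ((n - j) / i) else 0) else 0) = 0 := by
      split_ifs with h1 h2
      · exfalso
        have hij : i ∣ j := by
          have := Nat.dvd_sub hdn h2
          rwa [Nat.sub_sub_self h1] at this
        exact absurd (Nat.le_of_dvd hj0 hij) (not_le.mpr hji)
      · rfl
      · rfl
    rw [h1, zero_add]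
  · rw [if_neg hdn, add_zero]
    split_ifs with h1 h2
    · exact Or.inr ⟨(n - j) / i, rfl⟩
    · exact Or.inl rfl
    · exact Or.inl rfl

theorem alpha_unfair_degrees (α : ℝ) (k : ℕ) (h : AlphaUnfairWithFactorDeg α k) :
    ∀ i : ℕ, 1 ≤ i → ∀ j : ℕ, j ≤ i - 1 → AlphaUnfairWithFactorDeg α (i * k + j) := by
  intro i hi j hj
  obtain ⟨a, b, ha, hb, ha0, hb0, haI, hbI, ⟨n0, hn00, hn01⟩, hab, hdeg⟩ := h
  have hipos : 0 < i := hi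
  have hα : 0 ≤ α := by have := (haI 0).2; rw [ha0] at this; linarith
  have h0mem : (0 : ℝ) ∈ Set.Icc (-α) (1 + α) := ⟨by linarith, by linarith⟩
  -- B = expand i b
  have hBmonic : (expand ℝ i b).Monic := hb.expand hipos
  have hB0 : (expand ℝ i b).coeff 0 = 1 := by
    rw [coeff_expand hipos, if_pos (dvd_zero i), Nat.zero_div, hb0]
  have hBI : ∀ n, (expand ℝ i b).coeff n ∈ Set.Icc (-α) (1 + α) := by
    intro n
    rw [coeff_expand hipos]
    split_ifs with hd
    · exact hbI _
    · exact h0mem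
  have hBex : ∃ n, (expand ℝ i b).coeff n ≠ 0 ∧ (expand ℝ i b).coeff n ≠ 1 := by
    refine ⟨n0 * i, ?_, ?_⟩ <;>
      rw [coeff_expand hipos, if_pos (dvd_mul_left i n0), Nat.mul_div_cancel _ hipos]
    · exact hn00
    · exact hn01
  rcases Nat.eq_zero_or_pos j with hj0 | hj0
  · -- j = 0 : take expand i a and expand i b
    subst hj0
    refine ⟨expand ℝ i a, expand ℝ i b, ha.expand hipos, hBmonic, ?_, hB0, ?_, hBI, hBex, ?_, ?_⟩
    · rw [coeff_expand hipos, if_pos (dvd_zero i), Nat.zero_div, ha0]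
    · intro n
      rw [coeff_expand hipos]
      split_ifs with hd
      · exact haI _
      · exact h0mem
    · intro n
      rw [← map_mul, coeff_expand hipos]
      split_ifs with hd
      · exact hab _
      · exact Or.inl rfl
    · rw [natDegree_expand, hdeg, mul_comm, add_zero]
  · -- j ≥ 1 : take expand i a * (X^j + 1) and expand i b
    have hji : j < i := lt_of_le_of_lt hj (Nat.sub_lt hipos Nat.one_pos)
    have hXj : ((X : ℝ[X]) ^ j + 1).Monic := by
      rw [← C_1]; exact monic_X_pow_add_C _ hj0.ne'
    refine ⟨expand ℝ i a * (X ^ j + 1), expand ℝ i b,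
      (ha.expand hipos).mul hXj, hBmonic, ?_, hB0, ?_, hBI, hBex, ?_, ?_⟩
    · rw [mul_coeff_zero, coeff_expand hipos, if_pos (dvd_zero i), Nat.zero_div, ha0]
      simp [coeff_X_pow, hj0.ne]
    · intro n
      rcases coeff_expand_mul_key i j hj0 hji a n with h0 | ⟨m, hm⟩
      · rw [h0]; exact h0mem
      · rw [hm]; exact haI m
    · intro n
      have hprod : expand ℝ i a * (X ^ j + 1) * expand ℝ i b
          = expand ℝ i (a * b) * (X ^ j + 1) := by
        rw [map_mul]; ring
      rw [hprod]
      rcases coeff_expand_mul_key i j hj0 hji (a * b) n with h0 | ⟨m, hm⟩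
      · exact Or.inl h0
      · rw [hm]; exact hab m
    · rw [(ha.expand hipos).natDegree_mul hXj, natDegree_expand, hdeg, ← C_1,
        natDegree_X_pow_add_C, mul_comm]
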